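/- With the notation above (two probability measures μᵣ, μₛ; hypotheses h₁, h₂; labeling function f; risks εᵣ, εₛ), if Δεₛ ≥ |μᵣ − μₛ|(A), where A = {x : h₁(x) ≠ h₂(x) ∧ (h₁(x) ≠ f(x) ∨ h₂(x) ≠ f(x))}, then Δεᵣ ≥ 0; i.e., the error ranking of the two hypotheses is preserved from the synthetic distribution to the real distribution. -/

import Mathlib

open MeasureTheory

lemma abs_apply_le_totalVariation {Ω : Type*} [MeasurableSpace Ω]
    (s : SignedMeasure Ω) {S : Set Ω} (hS : MeasurableSet S) :
    |s S| ≤ (s.totalVariation S).toReal := by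
  have h := s.toJordanDecomposition_spec
  obtain ⟨i, hi₁, hi₂, hi₃, hpos, hneg⟩ := h
  have hs : s S = (s.toJordanDecomposition.posPart S).toReal
      - (s.toJordanDecomposition.negPart S).toReal := by
    conv_lhs => rw [← s.toSignedMeasure_toJordanDecomposition]
    rw [MeasureTheory.JordanDecomposition.toSignedMeasure,
      Measure.toSignedMeasure_sub_apply hS]
    rfl
  rw [hs, SignedMeasure.totalVariation, Measure.add_apply,
    ENNReal.toReal_add (measure_ne_top _ _) (measure_ne_top _ _)]
  have h1 : (0:ℝ) ≤ (s.toJordanDecomposition.posPart S).toReal := ENNReal.toReal_nonneg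
  have h2 : (0:ℝ) ≤ (s.toJordanDecomposition.negPart S).toReal := ENNReal.toReal_nonneg
  rw [abs_sub_le_iff]
  constructor <;> linarith

theorem rank_preservation_local {Ω Y : Type*} [MeasurableSpace Ω]
    (μr μs : Measure Ω) [IsProbabilityMeasure μr] [IsProbabilityMeasure μs]
    (f h₁ h₂ : Ω → Y)
    (hm1 : MeasurableSet {x | h₁ x ≠ f x})
    (hm2 : MeasurableSet {x | h₂ x ≠ f x})
    (hm12 : MeasurableSet {x | h₁ x ≠ h₂ x})
    (hgap : (μs {x | h₂ x ≠ f x}).toReal - (μs {x | h₁ x ≠ f x}).toReal ≥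
      ((μr.toSignedMeasure - μs.toSignedMeasure).totalVariation
        {x | h₁ x ≠ h₂ x ∧ (h₁ x ≠ f x ∨ h₂ x ≠ f x)}).toReal) :
    (μr {x | h₂ x ≠ f x}).toReal - (μr {x | h₁ x ≠ f x}).toReal ≥ 0 := by
  set E₁ := {x | h₁ x ≠ f x}
  set E₂ := {x | h₂ x ≠ f x}
  set A := {x | h₁ x ≠ h₂ x ∧ (h₁ x ≠ f x ∨ h₂ x ≠ f x)} with hA
  set ν := μr.toSignedMeasure - μs.toSignedMeasure with hν
  -- symmetric difference is contained in A
  have hsub : (E₂ \ E₁) ∪ (E₁ \ E₂) ⊆ A := by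
    rintro x (⟨hx2, hx1⟩ | ⟨hx1, hx2⟩)
    · simp only [E₁, E₂, Set.mem_setOf_eq, not_not] at hx1 hx2
      exact ⟨fun h => hx2 (h ▸ hx1), Or.inr hx2⟩
    · simp only [E₁, E₂, Set.mem_setOf_eq, not_not] at hx1 hx2
      exact ⟨fun h => hx1 (h.symm ▸ hx2), Or.inl hx1⟩
  have hmd1 : MeasurableSet (E₂ \ E₁) := hm2.diff hm1
  have hmd2 : MeasurableSet (E₁ \ E₂) := hm1.diff hm2
  have hν1 : |ν (E₂ \ E₁)| ≤ (ν.totalVariation (E₂ \ E₁)).toReal :=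
    abs_apply_le_totalVariation ν hmd1
  have hν2 : |ν (E₁ \ E₂)| ≤ (ν.totalVariation (E₁ \ E₂)).toReal :=
    abs_apply_le_totalVariation ν hmd2
  haveI : IsFiniteMeasure ν.totalVariation := by
    rw [SignedMeasure.totalVariation]; infer_instance
  have htvfin : ν.totalVariation A ≠ ⊤ := by
    rw [SignedMeasure.totalVariation]
    simp [ENNReal.add_ne_top, measure_ne_top]
  have htv_le : (ν.totalVariation (E₂ \ E₁)).toReal + (ν.totalVariation (E₁ \ E₂)).toReal
      ≤ (ν.totalVariation A).toReal := by
    rw [← ENNReal.toReal_add (measure_ne_top _ _) (measure_ne_top _ _)]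
    apply ENNReal.toReal_mono htvfin
    rw [← measure_union (disjoint_sdiff_sdiff) hmd2]
    exact measure_mono hsub
  -- decompose ν E₂ - ν E₁
  have happ : ∀ S : Set Ω, MeasurableSet S → ν S = (μr S).toReal - (μs S).toReal := by
    intro S hS
    rw [hν, Measure.toSignedMeasure_sub_apply hS]
    rfl
  have hdiff : ν (E₂ \ E₁) - ν (E₁ \ E₂)
      = ((μr E₂).toReal - (μs E₂).toReal) - ((μr E₁).toReal - (μs E₁).toReal) := by
    have h2 : ν E₂ = ν (E₂ \ E₁) + ν (E₂ ∩ E₁) := by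
      rw [← ν.of_union (Set.disjoint_sdiff_left.mono_right Set.inter_subset_right) hmd1
        (hm2.inter hm1), Set.diff_union_inter]
    have h1 : ν E₁ = ν (E₁ \ E₂) + ν (E₂ ∩ E₁) := by
      rw [Set.inter_comm, ← ν.of_union
        (Set.disjoint_sdiff_left.mono_right Set.inter_subset_right) hmd2
        (hm1.inter hm2), Set.diff_union_inter]
    rw [← happ E₂ hm2, ← happ E₁ hm1, h2, h1]
    ring
  have key : (μr E₂).toReal - (μr E₁).toReal
      = ((μs E₂).toReal - (μs E₁).toReal) + (ν (E₂ \ E₁) - ν (E₁ \ E₂)) := by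
    rw [hdiff]; ring
  have hb1 : ν (E₂ \ E₁) ≥ -(ν.totalVariation (E₂ \ E₁)).toReal := by
    have := abs_le.mp (le_trans (le_refl _) hν1)
    linarith [this.1]
  have hb2 : -(ν (E₁ \ E₂)) ≥ -(ν.totalVariation (E₁ \ E₂)).toReal := by
    have := abs_le.mp hν2
    linarith [this.2]
  rw [key]
  have : ((μs E₂).toReal - (μs E₁).toReal) ≥ (ν.totalVariation A).toReal := hgap
  linarith
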